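/- Let K be a convex body in ℝⁿ and let E(θ) = c + (cos θ)·u + (sin θ)·v be an ellipse inscribed in K (u, v linearly independent). Then E is a-maximal for K if and only if no translate of E lies entirely in the interior of K, i.e., if and only if for every w ∈ ℝⁿ there exists θ ∈ ℝ with E(θ) + w ∉ int K. -/

import Mathlib

/-- A convex body in ℝⁿ: a compact convex set with nonempty interior. -/
def IsConvexBody {n : ℕ} (K : Set (EuclideanSpace ℝ (Fin n))) : Prop :=
  IsCompact K ∧ Convex ℝ K ∧ (interior K).Nonempty

/-- The parametrized ellipse `θ ↦ c + (cos θ)•u + (sin θ)•v` is inscribed in `K`. -/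
def EllipseInscribed {n : ℕ} (K : Set (EuclideanSpace ℝ (Fin n)))
    (c u v : EuclideanSpace ℝ (Fin n)) : Prop :=
  ∀ θ : ℝ, c + (Real.cos θ) • u + (Real.sin θ) • v ∈ K

/-- The inscribed ellipse `θ ↦ c + (cos θ)•u + (sin θ)•v` is `a`-maximal for `K`:
no dilated copy (ratio `ρ > 1`, same orientation and eccentricity) is inscribed in `K`. -/
def AMaximal {n : ℕ} (K : Set (EuclideanSpace ℝ (Fin n)))
    (c u v : EuclideanSpace ℝ (Fin n)) : Prop :=
  ¬ ∃ (ρ : ℝ) (c' : EuclideanSpace ℝ (Fin n)), 1 < ρ ∧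
      ∀ θ : ℝ, c' + ρ • ((Real.cos θ) • u + (Real.sin θ) • v) ∈ K

set_option maxHeartbeats 1000000 in
/-- An inscribed ellipse is a-maximal iff no translate of it lies entirely in the interior. -/
theorem stmt_1 {n : ℕ} (hn : 1 ≤ n) (K : Set (EuclideanSpace ℝ (Fin n)))
    (hK : IsConvexBody K) (c u v : EuclideanSpace ℝ (Fin n))
    (huv : LinearIndependent ℝ ![u, v]) (hins : EllipseInscribed K c u v) :
    AMaximal K c u v ↔
      ∀ w : EuclideanSpace ℝ (Fin n), ∃ θ : ℝ,
        c + (Real.cos θ) • u + (Real.sin θ) • v + w ∉ interior K := by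
  constructor
  · -- a-maximal → no translate in interior
    intro hA w
    by_contra h
    push_neg at h
    apply hA
    set f : ℝ → EuclideanSpace ℝ (Fin n) :=
      fun θ => c + Real.cos θ • u + Real.sin θ • v + w with hf
    have hcont : Continuous f := by
      apply Continuous.add
      apply Continuous.add
      apply Continuous.add continuous_const
      · exact Real.continuous_cos.smul continuous_const
      · exact Real.continuous_sin.smul continuous_const
      · exact continuous_const
    have hS : IsCompact (f '' Set.Icc 0 (2 * Real.pi)) := isCompact_Icc.image hcont
    have hsub : f '' Set.Icc 0 (2 * Real.pi) ⊆ interior K := by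
      rintro x ⟨θ, _, rfl⟩; exact h θ
    obtain ⟨ε, hε, hth⟩ := hS.exists_thickening_subset_open isOpen_interior hsub
    set M := ‖u‖ + ‖v‖ + 1 with hM
    have hM0 : (0:ℝ) < M := by positivity
    refine ⟨1 + ε / M, c + w, by have := div_pos hε hM0; linarith, ?_⟩
    intro θ
    have hπ : (0:ℝ) < 2 * Real.pi := by positivity
    set k : ℤ := ⌊θ / (2 * Real.pi)⌋ with hk
    set θ' : ℝ := θ - k * (2 * Real.pi) with hθ'
    have h1 : (k : ℝ) * (2 * Real.pi) ≤ θ := by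
      have := Int.floor_le (θ / (2 * Real.pi))
      rwa [le_div_iff₀ hπ] at this
    have h2 : θ < ((k : ℝ) + 1) * (2 * Real.pi) := by
      have := Int.lt_floor_add_one (θ / (2 * Real.pi))
      rw [div_lt_iff₀ hπ] at this
      push_cast at this ⊢
      linarith
    have hθ'mem : θ' ∈ Set.Icc 0 (2 * Real.pi) := by
      constructor
      · simp only [hθ']; linarith
      · simp only [hθ']; nlinarith
    have heq : θ' + (k : ℝ) * (2 * Real.pi) = θ := by simp [hθ']
    have hcos : Real.cos θ = Real.cos θ' := by
      rw [← heq, Real.cos_add_int_mul_two_pi]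
    have hsin : Real.sin θ = Real.sin θ' := by
      rw [← heq, Real.sin_add_int_mul_two_pi]
    set e : EuclideanSpace ℝ (Fin n) := Real.cos θ • u + Real.sin θ • v with he
    have hq : f θ' ∈ f '' Set.Icc 0 (2 * Real.pi) := Set.mem_image_of_mem f hθ'mem
    have hqe : f θ' = c + e + w := by rw [hf, he, hcos, hsin]; abel
    have hdist : dist (c + w + (1 + ε / M) • e) (f θ') < ε := by
      rw [hqe, dist_eq_norm]
      have hp : c + w + (1 + ε / M) • e - (c + e + w) = (ε / M) • e := by
        rw [add_smul, one_smul]; abel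
      rw [hp, norm_smul]
      have hε' : ‖(ε / M : ℝ)‖ = ε / M := by
        rw [Real.norm_eq_abs, abs_of_pos (div_pos hε hM0)]
      rw [hε']
      have hee : ‖e‖ ≤ ‖u‖ + ‖v‖ := by
        calc ‖e‖ ≤ ‖Real.cos θ • u‖ + ‖Real.sin θ • v‖ := norm_add_le _ _
          _ ≤ ‖u‖ + ‖v‖ := by
              rw [norm_smul, norm_smul, Real.norm_eq_abs, Real.norm_eq_abs]
              have h1 := abs_le_one_iff_mul_self_le_one.mpr
                (by nlinarith [Real.sin_sq_add_cos_sq θ] : Real.cos θ * Real.cos θ ≤ 1)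
              have h2 := abs_le_one_iff_mul_self_le_one.mpr
                (by nlinarith [Real.sin_sq_add_cos_sq θ] : Real.sin θ * Real.sin θ ≤ 1)
              have hu0 : (0:ℝ) ≤ ‖u‖ := norm_nonneg _
              have hv0 : (0:ℝ) ≤ ‖v‖ := norm_nonneg _
              nlinarith
      have hd0 : 0 < ε / M := div_pos hε hM0
      have hlt : ε / M * ‖e‖ < ε / M * M := by
        apply mul_lt_mul_of_pos_left _ hd0
        calc ‖e‖ ≤ ‖u‖ + ‖v‖ := hee
          _ < M := by rw [hM]; linarith
      calc ε / M * ‖e‖ < ε / M * M := hlt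
        _ = ε := div_mul_cancel₀ ε (ne_of_gt hM0)
    have hmem : c + w + (1 + ε / M) • e ∈ Metric.thickening ε (f '' Set.Icc 0 (2 * Real.pi)) :=
      Metric.mem_thickening_iff.mpr ⟨f θ', hq, hdist⟩
    exact interior_subset (hth hmem)
  · -- no translate in interior → a-maximal
    intro hRHS
    rintro ⟨ρ, c', hρ, hmem⟩
    obtain ⟨z, hz⟩ := hK.2.2
    have hρ0 : (0:ℝ) < ρ := by linarith
    set t : ℝ := 1 - 1 / ρ with ht
    have ht0 : 0 < t := by
      have : 1 / ρ < 1 := by rw [div_lt_one hρ0]; exact hρ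
      simp only [ht]; linarith
    have ht1 : (0:ℝ) ≤ 1 - t := by
      have : 0 < 1 / ρ := by positivity
      simp only [ht]; linarith
    obtain ⟨θ, hθ⟩ := hRHS (t • z + (1 - t) • c' - c)
    apply hθ
    have hx := hmem θ
    have hcombo := hK.2.1.combo_interior_self_mem_interior hz hx ht0 ht1 (by ring)
    have hscal : (1 - t) * ρ = 1 := by
      simp only [ht]; field_simp; ring
    have : t • z + (1 - t) • (c' + ρ • (Real.cos θ • u + Real.sin θ • v)) =
        c + Real.cos θ • u + Real.sin θ • v + (t • z + (1 - t) • c' - c) := by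
      rw [smul_add, smul_smul, hscal, one_smul]; abel
    rwa [this] at hcombo
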